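/- For every m ≥ 1 and every function f : (2^ω)^m → 2^ω whose graph is coanalytic (i.e., the complement of the graph {(a, y) : y = f(a)} in (2^ω)^m × 2^ω is an analytic set), there exists a nonempty perfect set P ⊆ 2^ω that is free for f. -/

import Mathlib

open MeasureTheory Set Topology Filter

section Meagre
variable {α : Type*} [TopologicalSpace α]

lemma isMeagre_iUnion' {ι : Sort*} [Countable ι] {s : ι → Set α}
    (h : ∀ i, IsMeagre (s i)) : IsMeagre (⋃ i, s i) := by
  rw [IsMeagre, compl_iUnion]
  exact countable_iInter_mem.2 h

lemma IsMeagre.union' {s t : Set α} (hs : IsMeagre s) (ht : IsMeagre t) :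
    IsMeagre (s ∪ t) := by
  rw [IsMeagre, compl_union]
  exact inter_mem hs ht

lemma isMeagre_biUnion' {ι : Type*} {t : Set ι} (ht : t.Countable) {s : ι → Set α}
    (h : ∀ i ∈ t, IsMeagre (s i)) : IsMeagre (⋃ i ∈ t, s i) := by
  rw [IsMeagre, compl_iUnion]
  simp_rw [compl_iUnion]
  exact (countable_bInter_mem ht).2 h

lemma IsClosed.baireMeasurableSet' {s : Set α} (h : IsClosed s) : BaireMeasurableSet s :=
  (h.isOpen_compl.baireMeasurableSet).of_compl

end Meagre

section Hull
variable {α : Type*} [TopologicalSpace α]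

/-- The set of points near which `S` is non-meager. -/
def dStar (S : Set α) : Set α := {x | ∀ U : Set α, IsOpen U → x ∈ U → ¬ IsMeagre (U ∩ S)}

lemma isClosed_dStar (S : Set α) : IsClosed (dStar S) := by
  rw [← isOpen_compl_iff]
  have : (dStar S)ᶜ = ⋃₀ {U | IsOpen U ∧ IsMeagre (U ∩ S)} := by
    ext x
    simp only [mem_compl_iff, dStar, mem_setOf_eq, not_forall, mem_sUnion]
    constructor
    · rintro ⟨U, hU, hxU, hm⟩
      exact ⟨U, ⟨hU, not_not.1 hm⟩, hxU⟩
    · rintro ⟨U, ⟨hU, hm⟩, hxU⟩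
      exact ⟨U, hU, hxU, not_not.2 hm⟩
  rw [this]
  exact isOpen_sUnion fun U hU => hU.1

lemma dStar_subset_closure (S : Set α) : dStar S ⊆ closure S := by
  intro x hx
  by_contra hc
  exact hx (closure S)ᶜ isClosed_closure.isOpen_compl hc
    (by rw [(disjoint_compl_left.mono_right subset_closure).inter_eq]; exact IsMeagre.empty)

lemma diff_dStar_meagre [SecondCountableTopology α] (S : Set α) :
    IsMeagre (S \ dStar S) := by
  obtain ⟨B, hBc, -, hB⟩ := TopologicalSpace.exists_countable_basis α
  have hsub : S \ dStar S ⊆ ⋃ U ∈ {U ∈ B | IsMeagre (U ∩ S)}, (U ∩ S) := by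
    rintro x ⟨hxS, hxd⟩
    simp only [dStar, mem_setOf_eq, not_forall] at hxd
    obtain ⟨V, hV, hxV, hm⟩ := hxd
    obtain ⟨U, hUB, hxU, hUV⟩ := hB.isOpen_iff.1 hV x hxV
    have hm' : IsMeagre (U ∩ S) := (not_not.1 hm).mono (inter_subset_inter_left _ hUV)
    exact mem_biUnion ⟨hUB, hm'⟩ ⟨hxU, hxS⟩
  exact (isMeagre_biUnion' (hBc.mono (sep_subset _ _)) fun U hU => hU.2).mono hsub

/-- The Baire hull of a set. -/
def bHull (S : Set α) : Set α := dStar S ∪ S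

lemma subset_bHull (S : Set α) : S ⊆ bHull S := subset_union_right

lemma bHull_subset_closure (S : Set α) : bHull S ⊆ closure S :=
  union_subset (dStar_subset_closure S) subset_closure

lemma bHull_baireMeasurableSet [SecondCountableTopology α] (S : Set α) :
    BaireMeasurableSet (bHull S) := by
  have : bHull S = dStar S ∪ (S \ dStar S) := by
    simp [bHull, union_diff_self]
  rw [this]
  exact ((isClosed_dStar S).baireMeasurableSet').union (diff_dStar_meagre S).baireMeasurableSet

lemma meagre_of_subset_dStar {S Z : Set α} (hZ : BaireMeasurableSet Z)
    (h1 : Z ⊆ dStar S) (h2 : Z ∩ S = ∅) : IsMeagre Z := by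
  by_contra hnm
  obtain ⟨U, hUo, hZU⟩ := hZ.residualEq_isOpen
  have hE : {x | (x ∈ Z) = (x ∈ U)} ∈ residual α := hZU
  have hM : IsMeagre {x | (x ∈ Z) = (x ∈ U)}ᶜ := by
    rw [IsMeagre, compl_compl]; exact hE
  have hZU' : Z ∩ U ≠ ∅ := by
    intro hem
    apply hnm
    have : Z ⊆ (Z ∩ U) ∪ {x | (x ∈ Z) = (x ∈ U)}ᶜ := by
      intro x hx
      by_cases hxU : x ∈ U
      · exact Or.inl ⟨hx, hxU⟩
      · exact Or.inr (by simp [hx, hxU])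
    exact ((by rw [hem]; simpa using hM : IsMeagre ((Z ∩ U) ∪ _)).mono this)
  obtain ⟨x, hxZ, hxU⟩ := nonempty_iff_ne_empty.2 hZU'
  refine h1 hxZ U hUo hxU ?_
  refine hM.mono ?_
  rintro y ⟨hyU, hyS⟩
  have hyZ : y ∉ Z := fun hyZ => (by rw [← h2]; exact ⟨hyZ, hyS⟩ : y ∈ (∅ : Set α)).elim
  simp [hyZ, hyU]

end Hull

section Souslin

lemma cylinder_mem_open {ι : Type*} {π : ι → Type*} [∀ i, TopologicalSpace (π i)]
    {O : Set (∀ i, π i)} (hO : IsOpen O) {z : ∀ i, π i} (hz : z ∈ O) :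
    ∃ I : Finset ι, ∀ w, (∀ i ∈ I, w i = z i) → w ∈ O := by
  obtain ⟨I, u, hu, hsub⟩ := isOpen_pi_iff.1 hO z hz
  refine ⟨I, fun w hw => hsub fun i hi => ?_⟩
  rw [hw i hi]
  exact (hu i hi).2

variable {α : Type*} [MetricSpace α] [SecondCountableTopology α]

lemma ofFn_getD {n : ℕ} (f : Fin n → ℕ) {i : ℕ} (h : i < n) :
    (List.ofFn f).getD i 0 = f ⟨i, h⟩ := by
  rw [List.getD_eq_getElem _ _ (by simpa using h)]
  simp

lemma exists_branch' {P : List ℕ → Prop} (h0 : P []) (hstep : ∀ σ, P σ → ∃ k, P (σ ++ [k])) :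
    ∃ y : ℕ → ℕ, ∀ n, P (List.ofFn fun i : Fin n => y i) := by
  choose F hF using hstep
  let seq : ℕ → {σ : List ℕ // P σ} :=
    fun n => Nat.rec ⟨[], h0⟩ (fun _ p => ⟨p.1 ++ [F p.1 p.2], hF p.1 p.2⟩) n
  have hs : ∀ n, (seq (n+1)).1 = (seq n).1 ++ [F (seq n).1 (seq n).2] := fun _ => rfl
  have hlen : ∀ n, (seq n).1.length = n := by
    intro n
    induction n with
    | zero => rfl
    | succ n ih => rw [hs, List.length_append, ih]; rfl
  refine ⟨fun n => (seq (n+1)).1.getD n 0, fun n => ?_⟩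
  have hofn : ∀ n, (seq n).1 = List.ofFn (fun i : Fin n => (seq (i+1)).1.getD i 0) := by
    intro n
    induction n with
    | zero => rfl
    | succ n ih =>
      rw [List.ofFn_succ', List.concat_eq_append, hs n]
      congr 1
      · simp only [Fin.val_last]
        rw [List.getD_append_right _ _ _ _ (le_of_eq (hlen n)), hlen]
        simp
        rfl
  rw [← hofn]
  exact (seq n).2

/-- The cylinder in Baire space given by a finite sequence. -/
def bCyl (σ : List ℕ) : Set (ℕ → ℕ) := {y | ∀ i < σ.length, y i = σ.getD i 0}

lemma analytic_baireMeasurable_aux {g : (ℕ → ℕ) → α} (hg : Continuous g) :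
    BaireMeasurableSet (range g) := by
  set A : List ℕ → Set α := fun σ => g '' bCyl σ with hA
  set H : List ℕ → Set α := fun σ => bHull (A σ) with hH
  set W : List ℕ → Set α := fun σ => H σ \ ⋃ k, H (σ ++ [k]) with hW
  have hrange : range g = A [] := by
    simp [hA, bCyl, Set.image_univ, Set.eq_univ_iff_forall]
  have hAsub : ∀ σ, A σ ⊆ ⋃ k, A (σ ++ [k]) := by
    rintro σ x ⟨y, hy, rfl⟩
    refine mem_iUnion.2 ⟨y σ.length, ⟨y, fun i hi => ?_, rfl⟩⟩
    rcases Nat.lt_or_ge i σ.length with h | h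
    · rw [List.getD_append _ _ _ _ h]
      exact hy i h
    · have : i = σ.length := by
        simp only [List.length_append, List.length_singleton] at hi; omega
      subst this
      simp [List.getD_append_right, List.getD]
  have hWm : ∀ σ, IsMeagre (W σ) := by
    intro σ
    have hBM : BaireMeasurableSet (W σ) :=
      (bHull_baireMeasurableSet _).diff (BaireMeasurableSet.iUnion fun k =>
        bHull_baireMeasurableSet _)
    refine meagre_of_subset_dStar (S := A σ) hBM ?_ ?_
    · rintro x ⟨hx1, hx2⟩
      rcases hx1 with hx1 | hx1
      · exact hx1
      · exact absurd (mem_iUnion.2 (by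
          obtain ⟨k, hk⟩ := mem_iUnion.1 (hAsub σ hx1)
          exact ⟨k, subset_bHull _ hk⟩)) hx2
    · rw [eq_empty_iff_forall_notMem]
      rintro x ⟨⟨hx1, hx2⟩, hx3⟩
      exact hx2 (mem_iUnion.2 (by
        obtain ⟨k, hk⟩ := mem_iUnion.1 (hAsub σ hx3)
        exact ⟨k, subset_bHull _ hk⟩))
  have hMain : H [] \ range g ⊆ ⋃ σ : List ℕ, W σ := by
    intro x hx
    by_contra hxW
    apply hx.2
    simp only [mem_iUnion, not_exists] at hxW
    have hstep : ∀ σ : List ℕ, x ∈ H σ → ∃ k, x ∈ H (σ ++ [k]) := by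
      intro σ hσ
      by_contra hk
      push_neg at hk
      exact hxW σ ⟨hσ, by simpa using hk⟩
    obtain ⟨y, hy⟩ := exists_branch' hx.1 hstep
    have hxgy : x = g y := by
      have key : ∀ ε > 0, dist x (g y) ≤ ε := by
        intro ε hε
        have hV : IsOpen (g ⁻¹' Metric.ball (g y) ε) := (Metric.isOpen_ball).preimage hg
        have hyV : y ∈ g ⁻¹' Metric.ball (g y) ε := by
          simp [Metric.mem_ball, hε]
        obtain ⟨I, hI⟩ := cylinder_mem_open hV hyV
        set N : ℕ := I.sup id + 1 with hN
        have hIN : ∀ i ∈ I, i < N := fun i hi =>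
          Nat.lt_succ_of_le (Finset.le_sup (f := id) hi)
        have hsubV : bCyl (List.ofFn fun i : Fin N => y i) ⊆ g ⁻¹' Metric.ball (g y) ε := by
          intro w hw
          refine hI w fun i hi => ?_
          have hiN := hIN i hi
          have := hw i (by rw [List.length_ofFn]; exact hiN)
          rwa [ofFn_getD _ hiN] at this
        have hxc : x ∈ closure (A (List.ofFn fun i : Fin N => y i)) :=
          bHull_subset_closure _ (hy N)
        have : closure (A (List.ofFn fun i : Fin N => y i)) ⊆
            closure (Metric.ball (g y) ε) := by
          apply closure_mono
          rintro v ⟨w, hw, rfl⟩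
          exact hsubV hw
        have := Metric.closure_ball_subset_closedBall (this hxc)
        simpa [Metric.mem_closedBall] using this
      have : dist x (g y) ≤ 0 := le_of_forall_pos_le_add (by simpa using key)
      exact eq_of_dist_eq_zero (le_antisymm this dist_nonneg)
    exact ⟨y, hxgy.symm⟩
  have h2 : range g ⊆ H [] := by rw [hrange]; exact subset_bHull _
  have h1 : IsMeagre (H [] \ range g) := (isMeagre_iUnion' hWm).mono hMain
  rw [← diff_diff_cancel_left h2]
  exact (bHull_baireMeasurableSet _).diff h1.baireMeasurableSet

end Souslin

theorem MeasureTheory.AnalyticSet.baireMeasurable {α : Type*} [TopologicalSpace α]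
    [PolishSpace α] {s : Set α} (hs : AnalyticSet s) : BaireMeasurableSet s := by
  rw [AnalyticSet] at hs
  rcases hs with rfl | ⟨g, hg, rfl⟩
  · exact isOpen_empty.baireMeasurableSet
  · letI := TopologicalSpace.upgradeIsCompletelyMetrizable α
    exact analytic_baireMeasurable_aux hg

section KU
variable {β γ : Type*} [TopologicalSpace β] [TopologicalSpace γ]

lemma IsMeagre.of_isNowhereDense {s : Set γ} (h : IsNowhereDense s) : IsMeagre s :=
  isMeagre_iff_countable_union_isNowhereDense.2
    ⟨{s}, by simpa using h, countable_singleton s, by simp⟩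

lemma eq_empty_of_isMeagre_of_isOpen [BaireSpace β] {V : Set β} (hV : IsOpen V)
    (hm : IsMeagre V) : V = ∅ := by
  by_contra hne
  obtain ⟨b, hb⟩ := nonempty_iff_ne_empty.2 hne
  have hd : Dense Vᶜ := dense_of_mem_residual hm
  obtain ⟨x, hx1, hx2⟩ := hd.exists_mem_open hV ⟨b, hb⟩
  exact hx1 hx2

theorem kuratowskiUlam_meagre [SecondCountableTopology γ] [BaireSpace β] [BaireSpace γ]
    {s : Set (β × γ)} (hs : BaireMeasurableSet s)
    (h : ∀ b, IsMeagre {y | (b, y) ∈ s}) : IsMeagre s := by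
  obtain ⟨U, hUo, hsU⟩ := hs.residualEq_isOpen
  have hE : {x | (x ∈ s) = (x ∈ U)} ∈ residual _ := hsU
  set D : Set (β × γ) := {x | (x ∈ s) = (x ∈ U)}ᶜ with hD
  have hDm : IsMeagre D := by rw [IsMeagre, hD, compl_compl]; exact hE
  obtain ⟨S, hSnwd, hScnt, hScov⟩ := isMeagre_iff_countable_union_isNowhereDense.1 hDm
  -- bad fibers
  set Bad : Set β := ⋃ K ∈ S, {b | (interior {y | (b, y) ∈ closure K}).Nonempty} with hBad
  have hBadm : IsMeagre Bad := by
    refine isMeagre_biUnion' hScnt fun K hK => ?_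
    obtain ⟨B₀, hB₀c, -, hB₀⟩ := TopologicalSpace.exists_countable_basis γ
    have hcov : {b | (interior {y | (b, y) ∈ closure K}).Nonempty} ⊆
        ⋃ W ∈ {W ∈ B₀ | W.Nonempty}, {b | W ⊆ {y | (b, y) ∈ closure K}} := by
      rintro b ⟨y, hy⟩
      obtain ⟨W, hWB, hyW, hWsub⟩ := hB₀.isOpen_iff.1 isOpen_interior y hy
      exact mem_biUnion ⟨hWB, ⟨y, hyW⟩⟩ (hWsub.trans interior_subset)
    refine (isMeagre_biUnion' (hB₀c.mono (sep_subset _ _)) fun W hW => ?_).mono hcov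
    apply IsMeagre.of_isNowhereDense
    have hcl : IsClosed {b | W ⊆ {y | (b, y) ∈ closure K}} := by
      have : {b | W ⊆ {y | (b, y) ∈ closure K}} =
          ⋂ y ∈ W, (fun b => (b, y)) ⁻¹' closure K := by
        ext b; simp [Set.subset_def]
      rw [this]
      exact isClosed_biInter fun y _ =>
        isClosed_closure.preimage (Continuous.prodMk_left y)
    rw [hcl.isNowhereDense_iff]
    rw [eq_empty_iff_forall_notMem]
    intro b hb
    obtain ⟨y, hyW⟩ := hW.2
    have hbox : interior {b | W ⊆ {y | (b, y) ∈ closure K}} ×ˢ W ⊆ closure K := by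
      rintro ⟨b', y'⟩ ⟨hb', hy'⟩
      exact (interior_subset hb') hy'
    have : (b, y) ∈ interior (closure K) :=
      (isOpen_interior.prod (hB₀.isOpen hW.1)).subset_interior_iff.2 hbox ⟨hb, hyW⟩
    rw [hSnwd K hK] at this
    exact this
  -- U must be empty
  have hU : U = ∅ := by
    rw [eq_empty_iff_forall_notMem]
    rintro ⟨b₀, c₀⟩ hbc
    obtain ⟨V, W, hVo, hWo, hbV, hcW, hVW⟩ := isOpen_prod_iff.1 hUo b₀ c₀ hbc
    have hVnb : ¬ V ⊆ Bad := by
      intro hsub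
      exact absurd (eq_empty_of_isMeagre_of_isOpen hVo (hBadm.mono hsub))
        (nonempty_iff_ne_empty.1 ⟨b₀, hbV⟩)
    obtain ⟨b, hbV', hbBad⟩ := not_subset.1 hVnb
    have hDbm : IsMeagre {y | (b, y) ∈ D} := by
      refine isMeagre_iff_countable_union_isNowhereDense.2
        ⟨(fun K => {y | (b, y) ∈ closure K}) '' S, ?_, hScnt.image _, ?_⟩
      · rintro t ⟨K, hK, rfl⟩
        have hcl : IsClosed {y | (b, y) ∈ closure K} :=
          isClosed_closure.preimage (Continuous.prodMk_right b)
        rw [hcl.isNowhereDense_iff, eq_empty_iff_forall_notMem]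
        intro y hy
        exact hbBad (mem_biUnion hK ⟨y, hy⟩)
      · intro y hy
        obtain ⟨K, hK, hyK⟩ := hScov hy
        exact ⟨_, ⟨K, hK, rfl⟩, subset_closure hyK⟩
    have hWsub : W ⊆ {y | (b, y) ∈ s} ∪ {y | (b, y) ∈ D} := by
      intro y hyW
      by_cases hys : (b, y) ∈ s
      · exact Or.inl hys
      · refine Or.inr ?_
        have hyU : (b, y) ∈ U := hVW ⟨hbV', hyW⟩
        simp only [hD, mem_compl_iff, mem_setOf_eq]
        simp [hys, hyU]
    have : IsMeagre W := ((h b).union' hDbm).mono hWsub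
    exact absurd (eq_empty_of_isMeagre_of_isOpen hWo this)
      (nonempty_iff_ne_empty.1 ⟨c₀, hcW⟩)
  refine hDm.mono fun x hx => ?_
  by_contra hxD
  have : (x ∈ s) = (x ∈ U) := not_not.1 hxD
  rw [this, hU] at hx
  exact hx

section Mycielski

/-- Cylinder set in Cantor space given by a finite list. -/
def sCyl (u : List Bool) : Set (ℕ → Bool) := {x | ∀ i, ∀ _ : i < u.length, x i = u.getD i true}

lemma isOpen_sCyl (u : List Bool) : IsOpen (sCyl u) := by
  have : sCyl u = ⋂ i : Fin u.length, {x : ℕ → Bool | x i.1 = u.getD i.1 true} := by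
    ext x
    simp only [sCyl, Set.mem_setOf_eq, Set.mem_iInter]
    exact ⟨fun h i => h i.1 i.2, fun h i hi => h ⟨i, hi⟩⟩
  rw [this]
  refine isOpen_iInter_of_finite fun i => ?_
  show IsOpen ((fun x : ℕ → Bool => x i.1) ⁻¹' {u.getD i.1 true})
  exact (isOpen_discrete _).preimage (continuous_apply i.1)

lemma mem_sCyl_self (u : List Bool) : (fun i => u.getD i true) ∈ sCyl u := fun _ _ => rfl

lemma sCyl_nonempty (u : List Bool) : (sCyl u).Nonempty := ⟨_, mem_sCyl_self u⟩

lemma getD_of_prefix {u v : List Bool} (h : u <+: v) {i : ℕ} (hi : i < u.length) (d : Bool) :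
    v.getD i d = u.getD i d := by
  obtain ⟨t, rfl⟩ := h
  exact List.getD_append _ _ _ _ hi

lemma sCyl_mono {u v : List Bool} (h : u <+: v) : sCyl v ⊆ sCyl u := by
  intro x hx i hi
  rw [hx i (hi.trans_le h.length_le), getD_of_prefix h hi]

lemma ofFn_getD' {n : ℕ} (f : Fin n → Bool) {i : ℕ} (h : i < n) (d : Bool) :
    (List.ofFn f).getD i d = f ⟨i, h⟩ := by
  rw [List.getD_eq_getElem _ _ (by simpa using h)]
  simp

lemma prefix_ofFn {u : List Bool} {M : ℕ} (hM : u.length ≤ M) {z : ℕ → Bool}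
    (hz : z ∈ sCyl u) : u <+: List.ofFn (fun k : Fin M => z k) := by
  rw [List.prefix_iff_eq_take]
  apply List.ext_getElem
  · simp [Nat.min_eq_left, hM]
  · intro i h1 h2
    rw [List.getElem_take]
    have hiu : i < u.length := h1
    rw [List.getElem_ofFn]
    have := hz i hiu
    rw [List.getD_eq_getElem _ _ hiu] at this
    simp [this]

variable {n : ℕ}

lemma cyl2_mem_open' {O : Set (Fin n → (ℕ → Bool))} (hO : IsOpen O) {z : Fin n → ℕ → Bool}
    (hz : z ∈ O) : ∃ N, ∀ w, (∀ i, ∀ k, k < N → w i k = z i k) → w ∈ O := by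
  obtain ⟨I, u, hu, hsub⟩ := isOpen_pi_iff.1 hO z hz
  have hJ : ∀ i ∈ I, ∃ J : Finset ℕ, ∀ v : ℕ → Bool, (∀ k ∈ J, v k = z i k) → v ∈ u i := by
    intro i hi
    obtain ⟨J, hJ⟩ := cylinder_mem_open (hu i hi).1 (hu i hi).2
    exact ⟨J, hJ⟩
  choose! J hJ using hJ
  refine ⟨(I.sup fun i => (J i).sup id) + 1, fun w hw => hsub fun i hi => ?_⟩
  refine hJ i hi (w i) fun k hk => ?_
  refine hw i k ?_
  exact Nat.lt_succ_of_le ((Finset.le_sup (f := id) hk).trans (Finset.le_sup (f := fun i => (J i).sup id) hi))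

/-- The open box determined by a tuple of finite strings. -/
def sBox (u : Fin n → List Bool) : Set (Fin n → (ℕ → Bool)) := {p | ∀ i, p i ∈ sCyl (u i)}

lemma isOpen_sBox (u : Fin n → List Bool) : IsOpen (sBox u) := by
  have : sBox u = ⋂ i, (fun p : Fin n → ℕ → Bool => p i) ⁻¹' sCyl (u i) := by
    ext p; simp [sBox]
  rw [this]
  exact isOpen_iInter_of_finite fun i => (isOpen_sCyl _).preimage (continuous_apply i)

lemma sBox_nonempty (u : Fin n → List Bool) : (sBox u).Nonempty :=
  ⟨fun i => fun k => (u i).getD k true, fun i => mem_sCyl_self _⟩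

/-- Key avoidance step: shrink a box to avoid a nowhere dense set. -/
lemma avoid_step {K : Set (Fin n → (ℕ → Bool))} (hK : IsNowhereDense K)
    (u : Fin n → List Bool) :
    ∃ u' : Fin n → List Bool, (∀ i, u i <+: u' i) ∧ ∀ p ∈ sBox u', p ∉ closure K := by
  have hO : IsOpen (sBox u \ closure K) := (isOpen_sBox u).sdiff isClosed_closure
  have hne : (sBox u \ closure K).Nonempty := by
    rw [Set.diff_nonempty]
    intro hsub
    have : sBox u ⊆ interior (closure K) := (isOpen_sBox u).subset_interior_iff.2 hsub
    rw [hK] at this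
    obtain ⟨p, hp⟩ := sBox_nonempty u
    exact this hp
  obtain ⟨z, hz⟩ := hne
  obtain ⟨N, hN⟩ := cyl2_mem_open' hO hz
  refine ⟨fun i => List.ofFn (fun k : Fin (max N (u i).length) => z i k), fun i => ?_, ?_⟩
  · exact prefix_ofFn (le_max_right _ _) (hz.1 i)
  · intro p hp
    have : p ∈ sBox u \ closure K := by
      refine hN p fun i k hk => ?_
      have hk' : k < (List.ofFn (fun k : Fin (max N (u i).length) => z i k)).length := by
        simp [lt_max_iff, hk]
      have := hp i k hk'
      rw [this, ofFn_getD' _ (by simpa using hk')]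
    exact this.2

lemma step_list (K : ℕ → Set (Fin n → (ℕ → Bool))) (hK : ∀ j, IsNowhereDense (K j))
    (ρ₀ : List Bool → List Bool) (L : List (ℕ × (Fin n → List Bool))) :
    ∃ ρ' : List Bool → List Bool, (∀ t, ρ₀ t <+: ρ' t) ∧
      ∀ r ∈ L, Function.Injective r.2 →
        ∀ p, (∀ i, p i ∈ sCyl (ρ' (r.2 i))) → p ∉ closure (K r.1) := by
  classical
  induction L with
  | nil => exact ⟨ρ₀, fun t => List.prefix_refl _, fun r hr => absurd hr List.not_mem_nil⟩
  | cons r L ih =>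
    obtain ⟨ρ', hpre, hreq⟩ := ih
    by_cases hinj : Function.Injective r.2
    · obtain ⟨v, hv1, hv2⟩ := avoid_step (hK r.1) (fun i => ρ' (r.2 i))
      set ρ'' : List Bool → List Bool := fun t =>
        if h : ∃ i, r.2 i = t then v h.choose else ρ' t with hρ''
      have hval : ∀ i, ρ'' (r.2 i) = v i := by
        intro i
        have h : ∃ i', r.2 i' = r.2 i := ⟨i, rfl⟩
        have h2 : ρ'' (r.2 i) = v h.choose := dif_pos h
        rw [h2, hinj h.choose_spec]
      have hpre' : ∀ t, ρ' t <+: ρ'' t := by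
        intro t
        by_cases h : ∃ i, r.2 i = t
        · obtain ⟨i, rfl⟩ := h
          rw [hval i]
          exact hv1 i
        · have : ρ'' t = ρ' t := dif_neg h
          rw [this]
      refine ⟨ρ'', fun t => (hpre t).trans (hpre' t), ?_⟩
      rintro r' hr' hinj' p hp
      rcases List.mem_cons.1 hr' with rfl | hr'
      · exact hv2 p (fun i => by rw [← hval i]; exact hp i)
      · exact hreq r' hr' hinj' p fun i => sCyl_mono (hpre' _) (hp i)
    · exact ⟨ρ', hpre, fun r' hr' hinj' p hp =>
        (List.mem_cons.1 hr').elim (fun h => absurd hinj' (h ▸ hinj))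
          fun h => hreq r' h hinj' p hp⟩

lemma step_exists (K : ℕ → Set (Fin n → (ℕ → Bool))) (hK : ∀ j, IsNowhereDense (K j))
    (ρ : List Bool → List Bool) (l : ℕ) :
    ∃ ρ' : List Bool → List Bool,
      (∀ t b, (ρ t ++ [b]) <+: ρ' (t ++ [b])) ∧
      (∀ j, j ≤ l → ∀ τ : Fin n → List Bool, (∀ i, (τ i).length = l + 1) →
        Function.Injective τ →
        ∀ p, (∀ i, p i ∈ sCyl (ρ' (τ i))) → p ∉ closure (K j)) := by
  classical
  set L : List (ℕ × (Fin n → List Bool)) :=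
    (Finset.univ : Finset (Fin (l + 1) × (Fin n → List.Vector Bool (l + 1)))).toList.map
      (fun r => (r.1.1, fun i => (r.2 i).toList)) with hL
  obtain ⟨ρ', hpre, hreq⟩ := step_list K hK
    (fun t => ρ t.dropLast ++ [t.getLastD true]) L
  refine ⟨ρ', fun t b => ?_, fun j hj τ hτ hinj p hp => ?_⟩
  · have := hpre (t ++ [b])
    rwa [List.dropLast_concat, List.getLastD_concat] at this
  · have hmem : (j, τ) ∈ L := by
      rw [hL]
      refine List.mem_map.2 ⟨(⟨j, Nat.lt_succ_of_le hj⟩, fun i => ⟨τ i, hτ i⟩), ?_, rfl⟩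
      simp [Finset.mem_toList]
    exact hreq (j, τ) hmem hinj p hp

lemma exists_nwd_cover {γ : Type*} [TopologicalSpace γ] {M : Set γ} (hM : IsMeagre M) :
    ∃ K : ℕ → Set γ, (∀ j, IsNowhereDense (K j)) ∧ M ⊆ ⋃ j, K j := by
  obtain ⟨S, hnwd, hcnt, hcov⟩ := isMeagre_iff_countable_union_isNowhereDense.1 hM
  rcases S.eq_empty_or_nonempty with rfl | hne
  · exact ⟨fun _ => ∅, fun _ => isNowhereDense_empty, by simpa using hcov⟩
  · obtain ⟨e, rfl⟩ := Set.Countable.exists_eq_range hcnt hne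
    exact ⟨e, fun j => hnwd _ ⟨j, rfl⟩, by rwa [Set.sUnion_range] at hcov⟩

lemma ofFn_concat_eq (x : ℕ → Bool) (l : ℕ) :
    List.ofFn (fun i : Fin (l + 1) => x i) = (List.ofFn fun i : Fin l => x i) ++ [x l] := by
  rw [List.ofFn_succ', List.concat_eq_append]
  congr 1

theorem mycielski_free (M : Set (Fin n → (ℕ → Bool))) (hM : IsMeagre M) :
    ∃ φ : (ℕ → Bool) → (ℕ → Bool), Continuous φ ∧ Function.Injective φ ∧
      ∀ p : Fin n → (ℕ → Bool), (∀ i, p i ∈ Set.range φ) →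
        Function.Injective p → p ∉ M := by
  classical
  obtain ⟨K, hKnwd, hKcov⟩ := exists_nwd_cover hM
  choose F hF1 hF2 using step_exists K hKnwd
  set g : ℕ → List Bool → List Bool :=
    fun l => Nat.rec (fun _ => []) (fun l' ρ => F ρ l') l with hgdef
  set σ : List Bool → List Bool := fun t => g t.length t with hσdef
  have hσ1 : ∀ t b, σ t ++ [b] <+: σ (t ++ [b]) := by
    intro t b
    have h : σ (t ++ [b]) = F (g t.length) t.length (t ++ [b]) := by
      show g (t ++ [b]).length (t ++ [b]) = _
      have hl : (t ++ [b]).length = t.length + 1 := by simp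
      rw [hl]
    rw [h]
    exact hF1 (g t.length) t.length t b
  have hσ2 : ∀ l j, j ≤ l → ∀ τ : Fin n → List Bool, (∀ i, (τ i).length = l + 1) →
      Function.Injective τ →
      ∀ p, (∀ i, p i ∈ sCyl (σ (τ i))) → p ∉ closure (K j) := by
    intro l j hj τ hτ hinj p hp
    refine hF2 (g l) l j hj τ hτ hinj p fun i => ?_
    have h : σ (τ i) = F (g l) l (τ i) := by
      show g (τ i).length (τ i) = _
      rw [hτ i]
    rw [← h]
    exact hp i
  have hσlen : ∀ t : List Bool, t.length ≤ (σ t).length := by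
    intro t
    induction t using List.reverseRecOn with
    | nil => exact le_refl 0
    | append_singleton t b ih =>
      have h1 := (hσ1 t b).length_le
      simp only [List.length_append, List.length_singleton] at h1 ⊢
      omega
  set L : (ℕ → Bool) → ℕ → List Bool :=
    fun x l => σ (List.ofFn fun i : Fin l => x i) with hLdef
  have hLpre : ∀ x l, L x l <+: L x (l + 1) := by
    intro x l
    have := hσ1 (List.ofFn fun i : Fin l => x i) (x l)
    rw [← ofFn_concat_eq] at this
    exact (List.prefix_append _ _).trans this
  have hLmono : ∀ x l l', l ≤ l' → L x l <+: L x l' := by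
    intro x l l' h
    induction l', h using Nat.le_induction with
    | base => exact List.prefix_refl _
    | succ l' hl ih => exact ih.trans (hLpre x l')
  have hLlen : ∀ x l, l ≤ (L x l).length := by
    intro x l
    have := hσlen (List.ofFn fun i : Fin l => x i)
    rwa [List.length_ofFn] at this
  set φ : (ℕ → Bool) → (ℕ → Bool) := fun x k => (L x (k + 1)).getD k true with hφdef
  have hφcoh : ∀ x k l, k < l → φ x k = (L x l).getD k true := by
    intro x k l hkl
    have hpre := hLmono x (k + 1) l hkl
    exact (getD_of_prefix hpre (Nat.lt_of_lt_of_le (Nat.lt_succ_self k) (hLlen x (k+1))) true).symm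
  have hφmem : ∀ x l, φ x ∈ sCyl (L x l) := by
    intro x l k hk
    have h1 : φ x k = (L x (max l (k + 1))).getD k true :=
      hφcoh x k _ (Nat.lt_of_lt_of_le (Nat.lt_succ_self k) (le_max_right _ _))
    rw [h1, getD_of_prefix (hLmono x l _ (le_max_left _ _)) hk]
  have hLagree : ∀ x y : ℕ → Bool, ∀ l, (∀ i, i < l → x i = y i) → L x l = L y l := by
    intro x y l h
    have : (List.ofFn fun i : Fin l => x i) = List.ofFn fun i : Fin l => y i := by
      congr 1
      funext i
      exact h i.1 i.2
    show σ (List.ofFn fun i : Fin l => x i) = σ (List.ofFn fun i : Fin l => y i)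
    rw [this]
  have hφcont : Continuous φ := by
    refine continuous_pi fun k => ?_
    refine IsLocallyConstant.continuous ?_
    rw [IsLocallyConstant.iff_exists_open]
    intro x
    refine ⟨sCyl (List.ofFn fun i : Fin (k + 1) => x i), isOpen_sCyl _, ?_, ?_⟩
    · intro i hi
      rw [List.length_ofFn] at hi
      rw [ofFn_getD' _ hi]
    · intro y hy
      show (L y (k+1)).getD k true = (L x (k+1)).getD k true
      rw [hLagree y x (k+1) fun i hi => ?_]
      have hi' : i < (List.ofFn fun i : Fin (k + 1) => x i).length := by
        rwa [List.length_ofFn]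
      rw [hy i hi', ofFn_getD' _ hi]
  have hφinj : Function.Injective φ := by
    intro x y hxy
    by_contra hne
    obtain ⟨d, hd⟩ := Function.ne_iff.1 hne
    have hex : ∃ d, x d ≠ y d := ⟨d, hd⟩
    set d₀ := Nat.find hex with hd₀
    have h1 : x d₀ ≠ y d₀ := Nat.find_spec hex
    have hmin : ∀ i, i < d₀ → x i = y i := fun i hi =>
      not_not.1 (Nat.find_min hex hi)
    set t : List Bool := List.ofFn fun i : Fin d₀ => x i with ht
    have hty : t = List.ofFn fun i : Fin d₀ => y i := by
      rw [ht]
      congr 1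
      funext i
      exact hmin i.1 i.2
    set q := (σ t).length with hq
    have hval : ∀ z : ℕ → Bool, ∀ b : Bool,
        t = (List.ofFn fun i : Fin d₀ => z i) → z d₀ = b → φ z q = b := by
      intro z b htz hzb
      have hpre : σ t ++ [b] <+: L z (d₀ + 1) := by
        have he : (List.ofFn fun i : Fin (d₀ + 1) => z i) = t ++ [b] := by
          rw [ofFn_concat_eq, ← htz, hzb]
        show σ t ++ [b] <+: σ (List.ofFn fun i : Fin (d₀ + 1) => z i)
        rw [he]
        exact hσ1 t b
      have hlen : q < (σ t ++ [b]).length := by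
        simp [hq]
      have hq1 : q < (L z (d₀ + 1)).length := by
        have h3 := hpre.length_le
        simp only [List.length_append, List.length_singleton] at h3
        omega
      have h2 : φ z q = (L z (d₀ + 1)).getD q true := by
        rw [hφcoh z q (max (d₀ + 1) (q + 1)) (by omega)]
        rw [getD_of_prefix (hLmono z (d₀ + 1) _ (le_max_left _ _)) hq1]
      rw [h2, getD_of_prefix hpre hlen, List.getD_append_right _ _ _ _ hq.ge]
      simp [hq]
    have hx := hval x (x d₀) rfl rfl
    have hy := hval y (y d₀) hty rfl
    rw [hxy] at hx
    exact h1 (hx.symm.trans hy)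
  refine ⟨φ, hφcont, hφinj, ?_⟩
  intro p hp hpinj
  intro hpM
  obtain ⟨j, hj⟩ := Set.mem_iUnion.1 (hKcov hpM)
  choose x hx using hp
  have hxinj : Function.Injective x := by
    intro i i' h
    exact hpinj (by rw [← hx i, ← hx i', h])
  set D : Fin n → Fin n → ℕ := fun i i' =>
    if h : x i ≠ x i' then Nat.find (Function.ne_iff.1 h) else 0 with hD
  set l : ℕ := (Finset.univ.sup fun i => Finset.univ.sup fun i' => D i i') + j + 1 with hl
  have hjl : j ≤ l - 1 := by omega
  set τ : Fin n → List Bool := fun i => List.ofFn fun s : Fin l => x i s with hτ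
  have hτlen : ∀ i, (τ i).length = (l - 1) + 1 := by
    intro i
    rw [hτ]
    simp only [List.length_ofFn]
    omega
  have hτinj : Function.Injective τ := by
    intro i i' h
    by_contra hne
    have hxne : x i ≠ x i' := fun hcon => hne (hxinj hcon)
    have hfind := Nat.find_spec (Function.ne_iff.1 hxne)
    have hDlt : D i i' < l := by
      have h1 : D i i' ≤ Finset.univ.sup fun i' => D i i' :=
        Finset.le_sup (Finset.mem_univ i')
      have h2 : (Finset.univ.sup fun i' => D i i') ≤
          Finset.univ.sup fun i => Finset.univ.sup fun i' => D i i' :=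
        Finset.le_sup (f := fun i => Finset.univ.sup fun i' => D i i') (Finset.mem_univ i)
      omega
    have hDval : D i i' = Nat.find (Function.ne_iff.1 hxne) := dif_pos hxne
    have : (τ i).getD (D i i') true = (τ i').getD (D i i') true := by rw [h]
    rw [hτ] at this
    simp only at this
    rw [ofFn_getD' _ hDlt, ofFn_getD' _ hDlt] at this
    simp only [Fin.val_mk] at this
    rw [hDval] at this
    exact hfind this
  have hne : p ∉ closure (K j) := by
    refine hσ2 (l - 1) j hjl τ hτlen hτinj p fun i => ?_
    rw [← hx i]
    exact hφmem (x i) l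
  exact hne (subset_closure hj)

lemma perfect_range_of_cont_inj {φ : (ℕ → Bool) → (ℕ → Bool)} (hc : Continuous φ)
    (hinj : Function.Injective φ) : Perfect (Set.range φ) := by
  constructor
  · exact (isCompact_range hc).isClosed
  · rintro y ⟨z, rfl⟩
    rw [accPt_iff_nhds]
    intro U hU
    have hpre : φ ⁻¹' U ∈ nhds z := hc.continuousAt.preimage_mem_nhds hU
    obtain ⟨O, hOsub, hOopen, hzO⟩ := mem_nhds_iff.1 hpre
    obtain ⟨I, hI⟩ := cylinder_mem_open hOopen hzO
    set N := I.sup id + 1 with hN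
    set z' : ℕ → Bool := fun k => if k = N then !(z k) else z k with hz'
    have hz'O : z' ∈ O := by
      refine hI z' fun i hi => ?_
      have : i ≠ N := by
        have := Finset.le_sup (f := id) hi
        simp only [id_eq] at this
        omega
      simp [hz', this]
    have hz'ne : z' ≠ z := by
      intro h
      have := congrFun h N
      simp [hz'] at this
    exact ⟨φ z', ⟨hOsub hz'O, ⟨z', rfl⟩⟩, fun h => hz'ne (hinj h)⟩

lemma isMeagre_singleton_cantor (x : ℕ → Bool) : IsMeagre ({x} : Set (ℕ → Bool)) := by
  apply IsMeagre.of_isNowhereDense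
  rw [isClosed_singleton.isNowhereDense_iff, Set.eq_empty_iff_forall_notMem]
  intro y hy
  have hyx : y = x := Set.mem_singleton_iff.1 (interior_subset hy)
  subst hyx
  obtain ⟨I, hI⟩ := cylinder_mem_open isOpen_interior hy
  set N := I.sup id + 1 with hN
  set y' : ℕ → Bool := fun k => if k = N then !(y k) else y k with hy'
  have : y' ∈ interior ({y} : Set (ℕ → Bool)) := by
    refine hI y' fun i hi => ?_
    have : i ≠ N := by
      have := Finset.le_sup (f := id) hi
      simp only [id_eq] at this
      omega
    simp [hy', this]
  have h2 : y' = y := Set.mem_singleton_iff.1 (interior_subset this)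
  have := congrFun h2 N
  simp [hy'] at this

lemma analyticSet_preimage {α β : Type*} [TopologicalSpace α] [PolishSpace α]
    [TopologicalSpace β] [T2Space β] {ψ : α → β} (hψ : Continuous ψ) {s : Set β}
    (hs : AnalyticSet s) : AnalyticSet (ψ ⁻¹' s) := by
  rw [AnalyticSet] at hs
  rcases hs with rfl | ⟨g, hg, rfl⟩
  · simpa using analyticSet_empty
  · have hC : IsClosed {q : α × (ℕ → ℕ) | ψ q.1 = g q.2} :=
      isClosed_eq (hψ.comp continuous_fst) (hg.comp continuous_snd)
    have him : (fun q : α × (ℕ → ℕ) => q.1) '' {q | ψ q.1 = g q.2} = ψ ⁻¹' Set.range g := by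
      ext a
      constructor
      · rintro ⟨⟨a', ω⟩, hq, rfl⟩
        exact ⟨ω, hq.symm⟩
      · rintro ⟨ω, hω⟩
        exact ⟨(a, ω), hω.symm, rfl⟩
    rw [← him]
    exact hC.analyticSet.image_of_continuous continuous_fst

/-- The homeomorphism splitting off the last coordinate. -/
def lastHomeo (m : ℕ) : (Fin (m + 1) → (ℕ → Bool)) ≃ₜ (Fin m → (ℕ → Bool)) × (ℕ → Bool) where
  toFun p := (fun i => p i.castSucc, p (Fin.last m))
  invFun q := Fin.snoc q.1 q.2
  left_inv p := by
    funext i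
    refine Fin.lastCases ?_ ?_ i
    · simp
    · intro j
      simp
  right_inv q := by
    ext i
    · simp
    · simp
  continuous_toFun :=
    (continuous_pi fun i => continuous_apply i.castSucc).prodMk (continuous_apply (Fin.last m))
  continuous_invFun := by
    refine continuous_pi fun i => ?_
    refine Fin.lastCases ?_ ?_ i
    · simp only [Fin.snoc_last]
      exact continuous_snd
    · intro j
      simp only [Fin.snoc_castSucc]
      exact (continuous_apply j).comp continuous_fst

lemma snoc_injective {m : ℕ} {w : Fin m → (ℕ → Bool)} {z : ℕ → Bool}
    (hw : Function.Injective w) (hz : ∀ j, w j ≠ z) :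
    Function.Injective (Fin.snoc w z : Fin (m + 1) → (ℕ → Bool)) := by
  intro i i' h
  rcases Fin.eq_castSucc_or_eq_last i with ⟨j, rfl⟩ | rfl <;>
    rcases Fin.eq_castSucc_or_eq_last i' with ⟨j', rfl⟩ | rfl
  · simp only [Fin.snoc_castSucc] at h
    rw [hw h]
  · simp only [Fin.snoc_castSucc, Fin.snoc_last] at h
    exact absurd h (hz j)
  · simp only [Fin.snoc_castSucc, Fin.snoc_last] at h
    exact absurd h.symm (hz j')
  · rfl

end Mycielski

/-- Every function `f : (2^ω)^m → 2^ω` (with `m ≥ 1`) whose graph is coanalytic has a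
nonempty perfect free subset. -/
theorem coanalytic_graph_has_perfect_free_subset
    (m : ℕ) (hm : 1 ≤ m)
    (f : (Fin m → (ℕ → Bool)) → (ℕ → Bool))
    (hf : AnalyticSet
      ({p : (Fin m → (ℕ → Bool)) × (ℕ → Bool) | p.2 = f p.1}ᶜ)) :
    ∃ P : Set (ℕ → Bool), P.Nonempty ∧ Perfect P ∧
      ∀ a : Fin m → (ℕ → Bool), (∀ i, a i ∈ P) →
        (∃ i, f a = a i) ∨ f a ∉ P := by
  classical
  have hMσ : ∀ σ : Fin m → Fin m,
      IsMeagre {q : (Fin m → (ℕ → Bool)) × (ℕ → Bool) | q.2 = f (q.1 ∘ σ)} := by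
    intro σ
    have hψ : Continuous (fun q : (Fin m → (ℕ → Bool)) × (ℕ → Bool) =>
        ((fun i => q.1 (σ i), q.2) : (Fin m → (ℕ → Bool)) × (ℕ → Bool))) :=
      (continuous_pi fun i => (continuous_apply (σ i)).comp continuous_fst).prodMk
        continuous_snd
    haveI : PolishSpace ((Fin m → (ℕ → Bool)) × (ℕ → Bool)) := {}
    have hpre : AnalyticSet
        ({q : (Fin m → (ℕ → Bool)) × (ℕ → Bool) | q.2 = f (q.1 ∘ σ)}ᶜ) := by
      exact analyticSet_preimage hψ hf
    have hBM : BaireMeasurableSet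
        {q : (Fin m → (ℕ → Bool)) × (ℕ → Bool) | q.2 = f (q.1 ∘ σ)} :=
      (hpre.baireMeasurable).of_compl
    refine kuratowskiUlam_meagre hBM fun b => ?_
    have hsec : {y | (b, y) ∈ {q : (Fin m → (ℕ → Bool)) × (ℕ → Bool) | q.2 = f (q.1 ∘ σ)}}
        = {f (b ∘ σ)} := by
      ext y
      simp [Set.mem_singleton_iff]
    rw [hsec]
    exact isMeagre_singleton_cantor _
  set e := lastHomeo m with he
  have hN : IsMeagre (⋃ σ : Fin m → Fin m,
      e ⁻¹' {q : (Fin m → (ℕ → Bool)) × (ℕ → Bool) | q.2 = f (q.1 ∘ σ)}) :=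
    isMeagre_iUnion' fun σ =>
      (hMσ σ).preimage_of_isOpenMap e.continuous e.isOpenMap
  obtain ⟨φ, hφc, hφi, hφfree⟩ := mycielski_free _ hN
  refine ⟨Set.range φ, ⟨φ (fun _ => false), Set.mem_range_self _⟩,
    perfect_range_of_cont_inj hφc hφi, ?_⟩
  intro a ha
  by_contra hcon
  push_neg at hcon
  obtain ⟨hne, hfa⟩ := hcon
  choose x hx using ha
  obtain ⟨z, hz⟩ := hfa
  have hzx : ∀ i, x i ≠ z := by
    intro i h
    exact hne i (by rw [← hz, ← hx i, h])
  have hInf : Infinite {v : ℕ → Bool // v ≠ z} := by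
    refine Infinite.of_injective
      (fun n : ℕ => (⟨fun k => if k = n then !(z k) else z k, fun h => by
        have := congrFun h n
        simp at this⟩ : {v : ℕ → Bool // v ≠ z})) ?_
    intro n n' h
    by_contra hnn
    have h1 := congrFun (congrArg Subtype.val h) n
    simp [hnn] at h1
  set S₀ : Finset {v : ℕ → Bool // v ≠ z} :=
    Finset.image (fun i => ⟨x i, hzx i⟩) Finset.univ with hS₀
  have hcard : S₀.card ≤ m := le_trans Finset.card_image_le (by simp)
  obtain ⟨T, hsub, hTcard⟩ := Infinite.exists_superset_card_eq S₀ m hcard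
  set w : Fin m → (ℕ → Bool) :=
    fun i => ((T.equivFin.symm (Fin.cast hTcard.symm i)).1 : {v : ℕ → Bool // v ≠ z}).1
    with hw
  have hwinj : Function.Injective w := by
    intro i i' h
    have h2 : T.equivFin.symm (Fin.cast hTcard.symm i)
        = T.equivFin.symm (Fin.cast hTcard.symm i') := Subtype.ext (Subtype.ext h)
    have h3 := T.equivFin.symm.injective h2
    have h4 := congrArg Fin.val h3
    simp only [Fin.coe_cast] at h4
    exact Fin.ext h4
  have hwz : ∀ i, w i ≠ z := fun i => ((T.equivFin.symm _).1 : {v : ℕ → Bool // v ≠ z}).2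
  have hxw : ∀ i, ∃ j, w j = x i := by
    intro i
    have hmem : (⟨x i, hzx i⟩ : {v : ℕ → Bool // v ≠ z}) ∈ T :=
      hsub (Finset.mem_image_of_mem _ (Finset.mem_univ i))
    refine ⟨Fin.cast hTcard (T.equivFin ⟨_, hmem⟩), ?_⟩
    have hcc : Fin.cast hTcard.symm (Fin.cast hTcard (T.equivFin ⟨_, hmem⟩))
        = T.equivFin ⟨_, hmem⟩ := Fin.ext rfl
    rw [hw]
    simp only [hcc, Equiv.symm_apply_apply]
  choose τ hτ using hxw
  set p : Fin (m + 1) → (ℕ → Bool) := φ ∘ Fin.snoc w z with hp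
  have hpmem : ∀ i, p i ∈ Set.range φ := fun i => Set.mem_range_self _
  have hpinj : Function.Injective p := hφi.comp (snoc_injective hwinj hwz)
  have hpM : p ∈ ⋃ σ : Fin m → Fin m,
      e ⁻¹' {q : (Fin m → (ℕ → Bool)) × (ℕ → Bool) | q.2 = f (q.1 ∘ σ)} := by
    refine Set.mem_iUnion.2 ⟨τ, ?_⟩
    show (e p).2 = f ((e p).1 ∘ τ)
    have h1 : (e p).2 = φ z := by
      simp [he, hp, lastHomeo]
    have h2 : (e p).1 ∘ τ = a := by
      funext i
      have h3 : (e p).1 (τ i) = φ (w (τ i)) := by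
        simp [he, hp, lastHomeo]
      rw [Function.comp_apply, h3, hτ i, hx i]
    rw [h1, h2, hz]
  exact hφfree p hpmem hpinj hpM
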